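/- Assume: every event is transactional (NT = ∅); transactions form po-convex blocks, i.e. po_T ⊆ po; po is transitive; rf ⊆ W × R; and R ∩ W = ∅. Then the RSI happens-before relation decomposes as rsi-hb = si-hb ∪ ([W] ; po_i ; [W]). -/

import Mathlib

variable {E : Type*} {TxId : Type*} {Loc : Type*}

/-- Same-transaction relation: both events are transactional with equal transaction ids. -/
def St (tx : E → Option TxId) : E → E → Prop :=
  fun a b => ∃ t, tx a = some t ∧ tx b = some t

/-- Transaction lifting `r_T := st ; (r \ st) ; st`. -/
def RLift (tx : E → Option TxId) (r : E → E → Prop) : E → E → Prop :=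
  fun a b => ∃ c d, St tx a c ∧ r c d ∧ ¬ St tx c d ∧ St tx d b

/-- Reads-before relation `fr := (rf⁻¹ ; mo) \ id`. -/
def Fr (rf mo : E → E → Prop) : E → E → Prop :=
  fun a b => (∃ w, rf w a ∧ mo w b) ∧ a ≠ b

/-- Externally-reading reads: `toutR := codom (rf \ st)`. -/
def ToutR (tx : E → Option TxId) (rf : E → E → Prop) : Set E :=
  { b | ∃ a, rf a b ∧ ¬ St tx a b }

/-- `si-rb := [toutR] ; fr_T ; [W]`. -/
def SiRb (tx : E → Option TxId) (W : Set E) (rf mo : E → E → Prop) : E → E → Prop :=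
  fun a b => a ∈ ToutR tx rf ∧ RLift tx (Fr rf mo) a b ∧ b ∈ W

/-- SI happens-before: `si-hb := (po_T ∪ rf_T ∪ mo_T ∪ si-rb)⁺`. -/
def SiHb (tx : E → Option TxId) (W : Set E) (po rf mo : E → E → Prop) : E → E → Prop :=
  Relation.TransGen (fun a b =>
    RLift tx po a b ∨ RLift tx rf a b ∨ RLift tx mo a b ∨ SiRb tx W rf mo a b)

/-- Non-transactional events. -/
def NTset (tx : E → Option TxId) : Set E := { e | tx e = none }

/-- `rsi-po := (po \ po_i) ∪ ([W] ; po_i ; [W])`. -/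
def RsiPo (tx : E → Option TxId) (W : Set E) (po : E → E → Prop) : E → E → Prop :=
  fun a b => (po a b ∧ ¬ St tx a b) ∨ (a ∈ W ∧ (po a b ∧ St tx a b) ∧ b ∈ W)

/-- `rsi-rf := (rf ; [NT]) ∪ ([NT] ; rf ; st) ∪ rf_T ∪ (mo ; rf)_T`. -/
def RsiRf (tx : E → Option TxId) (rf mo : E → E → Prop) : E → E → Prop :=
  fun a b =>
    (rf a b ∧ b ∈ NTset tx) ∨
    (a ∈ NTset tx ∧ ∃ c, rf a c ∧ St tx c b) ∨
    RLift tx rf a b ∨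
    RLift tx (fun x y => ∃ z, mo x z ∧ rf z y) a b

/-- RSI happens-before: `rsi-hb := (rsi-po ∪ rsi-rf ∪ mo_T ∪ si-rb)⁺`. -/
def RsiHb (tx : E → Option TxId) (W : Set E) (po rf mo : E → E → Prop) : E → E → Prop :=
  Relation.TransGen (fun a b =>
    RsiPo tx W po a b ∨ RsiRf tx rf mo a b ∨ RLift tx mo a b ∨ SiRb tx W rf mo a b)

/-- Internal consistency axiom: `rf_i ∪ mo_i ∪ fr_i ⊆ po`. -/
def INTax (tx : E → Option TxId) (po rf mo : E → E → Prop) : Prop :=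
  ∀ a b, (rf a b ∨ mo a b ∨ Fr rf mo a b) → St tx a b → po a b

/-- Acyclicity: the transitive closure is irreflexive. -/
def Acyclic (r : E → E → Prop) : Prop := ∀ a, ¬ Relation.TransGen r a a

/-- SI-consistency: INT together with acyclicity of `(po_T ∪ rf_T ∪ mo_T) ; fr_T^?`. -/
def SIConsistent (tx : E → Option TxId) (po rf mo : E → E → Prop) : Prop :=
  INTax tx po rf mo ∧
  Acyclic (fun a c => ∃ b,
    (RLift tx po a b ∨ RLift tx rf a b ∨ RLift tx mo a b) ∧
    (RLift tx (Fr rf mo) b c ∨ b = c))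

/-- RSI-consistency: INT together with acyclicity of `rsi-hb|loc ∪ mo ∪ fr`. -/
def RSIConsistent (tx : E → Option TxId) (W : Set E) (loc : E → Loc)
    (po rf mo : E → E → Prop) : Prop :=
  INTax tx po rf mo ∧
  Acyclic (fun a b =>
    (RsiHb tx W po rf mo a b ∧ loc a = loc b) ∨ mo a b ∨ Fr rf mo a b)


section Stmt8Aux
variable {E TxId : Type*}

lemma st_symm {tx : E → Option TxId} {a b : E} (h : St tx a b) : St tx b a := by
  obtain ⟨t, h1, h2⟩ := h; exact ⟨t, h2, h1⟩

lemma st_trans {tx : E → Option TxId} {a b c : E} (h : St tx a b) (h2 : St tx b c) :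
    St tx a c := by
  obtain ⟨t, ha, hb⟩ := h; obtain ⟨t', hb', hc⟩ := h2
  cases hb.symm.trans hb'
  exact ⟨t, ha, hc⟩

end Stmt8Aux

/-- if every event is transactional, transactions are po-convex blocks,
`po` is transitive, `rf ⊆ W × R` and `R ∩ W = ∅`, then
`rsi-hb = si-hb ∪ ([W] ; po_i ; [W])`. -/
theorem stmt8 {E TxId : Type*} (R W : Set E) (tx : E → Option TxId)
    (po rf mo : E → E → Prop)
    (hNT : NTset tx = ∅)
    (hconv : ∀ a b, RLift tx po a b → po a b)
    (hpotrans : Transitive po)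
    (hrfWR : ∀ a b, rf a b → a ∈ W ∧ b ∈ R)
    (hRW : R ∩ W = ∅) :
    ∀ a b, RsiHb tx W po rf mo a b ↔
      (SiHb tx W po rf mo a b ∨ (a ∈ W ∧ (po a b ∧ St tx a b) ∧ b ∈ W)) := by
  -- every event is transactional
  have htx : ∀ e : E, ∃ t, tx e = some t := by
    intro e
    rcases h : tx e with _ | t
    · exact absurd (show e ∈ NTset tx from h) (by simp [hNT])
    · exact ⟨t, rfl⟩
  have strefl : ∀ e : E, St tx e e := fun e => by
    obtain ⟨t, ht⟩ := htx e; exact ⟨t, ht, ht⟩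
  -- abbreviations
  set wpw : E → E → Prop := fun a b => a ∈ W ∧ (po a b ∧ St tx a b) ∧ b ∈ W with hwpw
  set gsi : E → E → Prop := fun a b =>
    RLift tx po a b ∨ RLift tx rf a b ∨ RLift tx mo a b ∨ SiRb tx W rf mo a b with hgsi
  have wpw_trans : ∀ {a b c}, wpw a b → wpw b c → wpw a c := by
    rintro a b c ⟨haW, ⟨hpo1, hst1⟩, hbW⟩ ⟨_, ⟨hpo2, hst2⟩, hcW⟩
    exact ⟨haW, ⟨hpotrans hpo1 hpo2, st_trans hst1 hst2⟩, hcW⟩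
  -- si generator step absorbs wpw on the right
  have gsi_wpw : ∀ {a b c}, gsi a b → wpw b c → gsi a c := by
    rintro a b c hg ⟨hbW, ⟨hpo, hst⟩, hcW⟩
    rcases hg with ⟨x, y, h1, h2, h3, h4⟩ | ⟨x, y, h1, h2, h3, h4⟩ |
      ⟨x, y, h1, h2, h3, h4⟩ | ⟨ht, ⟨x, y, h1, h2, h3, h4⟩, _⟩
    · exact Or.inl ⟨x, y, h1, h2, h3, st_trans h4 hst⟩
    · exact Or.inr (Or.inl ⟨x, y, h1, h2, h3, st_trans h4 hst⟩)
    · exact Or.inr (Or.inr (Or.inl ⟨x, y, h1, h2, h3, st_trans h4 hst⟩))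
    · exact Or.inr (Or.inr (Or.inr ⟨ht, ⟨x, y, h1, h2, h3, st_trans h4 hst⟩, hcW⟩))
  -- wpw absorbs si generator step on the left
  have wpw_gsi : ∀ {a b c}, wpw a b → gsi b c → gsi a c := by
    rintro a b c ⟨haW, ⟨hpo, hst⟩, hbW⟩ hg
    rcases hg with ⟨x, y, h1, h2, h3, h4⟩ | ⟨x, y, h1, h2, h3, h4⟩ |
      ⟨x, y, h1, h2, h3, h4⟩ | ⟨ht, hfr, hcW⟩
    · exact Or.inl ⟨x, y, st_trans hst h1, h2, h3, h4⟩
    · exact Or.inr (Or.inl ⟨x, y, st_trans hst h1, h2, h3, h4⟩)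
    · exact Or.inr (Or.inr (Or.inl ⟨x, y, st_trans hst h1, h2, h3, h4⟩))
    · obtain ⟨w, hrf, _⟩ := ht
      have hbR : b ∈ R := (hrfWR w b hrf).2
      exact absurd (show b ∈ R ∩ W from ⟨hbR, hbW⟩) (by simp [hRW])
  -- SiHb absorbs wpw on the right
  have sihb_wpw : ∀ {a b c}, SiHb tx W po rf mo a b → wpw b c → SiHb tx W po rf mo a c := by
    intro a b c h hw
    induction h with
    | single h => exact Relation.TransGen.single (gsi_wpw h hw)
    | tail h hstep _ => exact Relation.TransGen.tail h (gsi_wpw hstep hw)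
  -- wpw absorbs SiHb on the right
  have wpw_sihb : ∀ {a b c}, wpw a b → SiHb tx W po rf mo b c → SiHb tx W po rf mo a c := by
    intro a b c hw h
    induction h using Relation.TransGen.head_induction_on with
    | single hg => exact Relation.TransGen.single (wpw_gsi hw hg)
    | head hg hrest _ => exact Relation.TransGen.head (wpw_gsi hw hg) hrest
  -- target predicate
  set X : E → E → Prop := fun a b => SiHb tx W po rf mo a b ∨ wpw a b with hX
  have X_trans : ∀ {a b c}, X a b → X b c → X a c := by
    rintro a b c (h1 | h1) (h2 | h2)
    · exact Or.inl (h1.trans h2)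
    · exact Or.inl (sihb_wpw h1 h2)
    · exact Or.inl (wpw_sihb h1 h2)
    · exact Or.inr (wpw_trans h1 h2)
  -- each rsi generator step lands in X
  have step_map : ∀ {a b}, (RsiPo tx W po a b ∨ RsiRf tx rf mo a b ∨
      RLift tx mo a b ∨ SiRb tx W rf mo a b) → X a b := by
    rintro a b (h | h | h | h)
    · rcases h with ⟨hpo, hnst⟩ | h
      · exact Or.inl (Relation.TransGen.single
          (Or.inl ⟨a, b, strefl a, hpo, hnst, strefl b⟩))
      · exact Or.inr h
    · rcases h with ⟨_, hb⟩ | ⟨ha, _⟩ | h | ⟨c, d, hac, ⟨z, hmo, hrf⟩, hncd, hdb⟩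
      · exact absurd hb (by simp [hNT])
      · exact absurd ha (by simp [hNT])
      · exact Or.inl (Relation.TransGen.single (Or.inr (Or.inl h)))
      · by_cases hcz : St tx c z
        · have hnzd : ¬ St tx z d := fun h => hncd (st_trans hcz h)
          exact Or.inl (Relation.TransGen.single (Or.inr (Or.inl
            ⟨z, d, st_trans hac hcz, hrf, hnzd, hdb⟩)))
        · by_cases hzd : St tx z d
          · exact Or.inl (Relation.TransGen.single (Or.inr (Or.inr (Or.inl
              ⟨c, z, hac, hmo, hcz, st_trans hzd hdb⟩))))
          · exact Or.inl (Relation.TransGen.head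
              (Or.inr (Or.inr (Or.inl ⟨c, z, hac, hmo, hcz, strefl z⟩)))
              (Relation.TransGen.single (Or.inr (Or.inl
                ⟨z, d, strefl z, hrf, hzd, hdb⟩))))
    · exact Or.inl (Relation.TransGen.single (Or.inr (Or.inr (Or.inl h))))
    · exact Or.inl (Relation.TransGen.single (Or.inr (Or.inr (Or.inr h))))
  intro a b
  constructor
  · intro h
    induction h with
    | single h => exact step_map h
    | tail _ hstep ih => exact X_trans ih (step_map hstep)
  · rintro (h | h)
    · refine Relation.TransGen.mono ?_ _ _ h
      rintro x y (⟨c, d, h1, h2, h3, h4⟩ | h | h | h)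
      · have hpo : po x y := hconv x y ⟨c, d, h1, h2, h3, h4⟩
        have hnst : ¬ St tx x y := fun hst =>
          h3 (st_trans (st_symm h1) (st_trans hst (st_symm h4)))
        exact Or.inl (Or.inl ⟨hpo, hnst⟩)
      · exact Or.inr (Or.inl (Or.inr (Or.inr (Or.inl h))))
      · exact Or.inr (Or.inr (Or.inl h))
      · exact Or.inr (Or.inr (Or.inr h))
    · exact Relation.TransGen.single (Or.inl (Or.inr h))
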